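/- Let w ≥ 1, let H = (1/√2)·!![1,1;1,−1] be the Hadamard matrix, let X̄ = X^{⊗w}, Z̄ = Z^{⊗w}, and let C̃ = |0⟩⟨0| ⊗ I_{2^w} + |1⟩⟨1| ⊗ X̄ on ℂ² ⊗ (ℂ²)^{⊗w}. Then (H ⊗ H^{⊗w}) · C̃ · (H ⊗ H^{⊗w}) = (1/2)·( I₂ ⊗ (I_{2^w} + Z̄) + X ⊗ (I_{2^w} − Z̄) ). In particular, conjugating by transversal Hadamards exchanges the roles of control and target of the clean–noisy CNOT, the right-hand side being the gate that applies X to the first qubit controlled on the logical Z̄-eigenvalue of the remaining w qubits. -/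

import Mathlib

open Matrix
open scoped Kronecker

/-- The Pauli `X` matrix. -/
noncomputable def PauliX : Matrix (Fin 2) (Fin 2) ℂ := !![0, 1; 1, 0]

/-- The Pauli `Z` matrix. -/
noncomputable def PauliZ : Matrix (Fin 2) (Fin 2) ℂ := !![1, 0; 0, -1]

/-- The Hadamard matrix `H = (1/√2)·!![1,1;1,−1]`. -/
noncomputable def Hmat : Matrix (Fin 2) (Fin 2) ℂ :=
  ((Real.sqrt 2 : ℂ))⁻¹ • !![1, 1; 1, -1]

/-- Conversion from `Bool` basis labels to `Fin 2`. -/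
def b2f (b : Bool) : Fin 2 := if b then 1 else 0

/-- The `w`-fold Kronecker power `X̄ = X^{⊗w}`, indexed by `Fin w → Bool`. -/
noncomputable def Xw (w : ℕ) : Matrix (Fin w → Bool) (Fin w → Bool) ℂ :=
  fun x y => ∏ k, PauliX (b2f (x k)) (b2f (y k))

/-- The `w`-fold Kronecker power `Z̄ = Z^{⊗w}`, indexed by `Fin w → Bool`. -/
noncomputable def Zw (w : ℕ) : Matrix (Fin w → Bool) (Fin w → Bool) ℂ :=
  fun x y => ∏ k, PauliZ (b2f (x k)) (b2f (y k))

/-- The `w`-fold Kronecker power `H^{⊗w}` of the Hadamard, indexed by `Fin w → Bool`. -/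
noncomputable def Hw (w : ℕ) : Matrix (Fin w → Bool) (Fin w → Bool) ℂ :=
  fun x y => ∏ k, Hmat (b2f (x k)) (b2f (y k))

/-- The clean–noisy gate `C̃ = |0⟩⟨0| ⊗ I_{2^w} + |1⟩⟨1| ⊗ X̄` on `ℂ² ⊗ (ℂ²)^{⊗w}`. -/
noncomputable def Ctilde (w : ℕ) :
    Matrix (Fin 2 × (Fin w → Bool)) (Fin 2 × (Fin w → Bool)) ℂ :=
  Matrix.single 0 0 1 ⊗ₖ (1 : Matrix (Fin w → Bool) (Fin w → Bool) ℂ)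
    + Matrix.single 1 1 1 ⊗ₖ Xw w

section Aux

noncomputable def TPow (w : ℕ) (A : Matrix (Fin 2) (Fin 2) ℂ) :
    Matrix (Fin w → Bool) (Fin w → Bool) ℂ :=
  fun x y => ∏ k, A (b2f (x k)) (b2f (y k))

lemma b2f_bij : Function.Bijective b2f := by decide

lemma TPow_mul (w : ℕ) (A B : Matrix (Fin 2) (Fin 2) ℂ) :
    TPow w A * TPow w B = TPow w (A * B) := by
  ext x y
  rw [Matrix.mul_apply]
  unfold TPow
  have h : ∀ k : Fin w, (A * B) (b2f (x k)) (b2f (y k))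
      = ∑ b : Bool, A (b2f (x k)) (b2f b) * B (b2f b) (b2f (y k)) := by
    intro k
    rw [Matrix.mul_apply]
    exact (Fintype.sum_bijective b2f b2f_bij _ _ (fun b => rfl)).symm
  simp_rw [h]
  rw [Finset.prod_univ_sum, Fintype.piFinset_univ]
  congr 1
  ext z
  rw [Finset.prod_mul_distrib]

lemma TPow_one (w : ℕ) : TPow w 1 = 1 := by
  ext x y
  unfold TPow
  simp only [Matrix.one_apply]
  by_cases h : x = y
  · subst h; simp
  · rw [if_neg h]
    obtain ⟨k, hk⟩ := Function.ne_iff.mp h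
    apply Finset.prod_eq_zero (Finset.mem_univ k)
    rw [if_neg (fun hc => hk (b2f_bij.1 hc))]

lemma hc2 : ((Real.sqrt 2 : ℝ) : ℂ)⁻¹ * ((Real.sqrt 2 : ℝ) : ℂ)⁻¹ = 2⁻¹ := by
  rw [← mul_inv, ← Complex.ofReal_mul, Real.mul_self_sqrt (by norm_num)]
  norm_num

lemma E00_eq : (Matrix.single 0 0 1 : Matrix (Fin 2) (Fin 2) ℂ) = !![1,0;0,0] := by
  ext i j; fin_cases i <;> fin_cases j <;> simp [Matrix.single]

lemma E11_eq : (Matrix.single 1 1 1 : Matrix (Fin 2) (Fin 2) ℂ) = !![0,0;0,1] := by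
  ext i j; fin_cases i <;> fin_cases j <;> simp [Matrix.single]

lemma H_mul_H : Hmat * Hmat = 1 := by
  unfold Hmat
  rw [Matrix.smul_mul, Matrix.mul_smul, smul_smul, hc2]
  ext i j
  fin_cases i <;> fin_cases j <;>
    simp [Matrix.mul_apply, Fin.sum_univ_two, Matrix.one_apply] <;> ring

lemma H_X_H : Hmat * PauliX * Hmat = PauliZ := by
  unfold Hmat PauliX PauliZ
  rw [Matrix.smul_mul, Matrix.smul_mul, Matrix.mul_smul, smul_smul, hc2]
  ext i j
  fin_cases i <;> fin_cases j <;>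
    simp [Matrix.mul_apply, Fin.sum_univ_two] <;> ring

lemma H_E00_H : Hmat * Matrix.single 0 0 1 * Hmat
    = (2:ℂ)⁻¹ • (1 + PauliX) := by
  rw [E00_eq]
  unfold Hmat PauliX
  rw [Matrix.smul_mul, Matrix.smul_mul, Matrix.mul_smul, smul_smul, hc2]
  ext i j
  fin_cases i <;> fin_cases j <;>
    simp [Matrix.mul_apply, Fin.sum_univ_two, Matrix.one_apply]

lemma H_E11_H : Hmat * Matrix.single 1 1 1 * Hmat
    = (2:ℂ)⁻¹ • (1 - PauliX) := by
  rw [E11_eq]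
  unfold Hmat PauliX
  rw [Matrix.smul_mul, Matrix.smul_mul, Matrix.mul_smul, smul_smul, hc2]
  ext i j
  fin_cases i <;> fin_cases j <;>
    simp [Matrix.mul_apply, Fin.sum_univ_two, Matrix.one_apply]

end Aux


/-- Control–target reversal identity (Eq. (11) of the paper): conjugating the clean–noisy CNOT
by transversal Hadamards gives
`(1/2)·(I₂ ⊗ (I + Z̄) + X ⊗ (I − Z̄))`, the gate applying `X` on the first qubit controlled on
the logical `Z̄`-eigenvalue of the remaining `w` qubits. -/
theorem hadamard_reverses_ctilde (w : ℕ) (hw : 1 ≤ w) :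
    (Hmat ⊗ₖ Hw w) * Ctilde w * (Hmat ⊗ₖ Hw w) =
      (2 : ℂ)⁻¹ • ((1 : Matrix (Fin 2) (Fin 2) ℂ) ⊗ₖ
            ((1 : Matrix (Fin w → Bool) (Fin w → Bool) ℂ) + Zw w)
          + PauliX ⊗ₖ ((1 : Matrix (Fin w → Bool) (Fin w → Bool) ℂ) - Zw w)) := by
  have hHw : Hw w = TPow w Hmat := rfl
  have hXw : Xw w = TPow w PauliX := rfl
  have hZw : Zw w = TPow w PauliZ := rfl
  have hHwHw : Hw w * Hw w = 1 := by
    rw [hHw, TPow_mul, H_mul_H, TPow_one]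
  have hHwXwHw : Hw w * Xw w * Hw w = Zw w := by
    rw [hHw, hXw, hZw, TPow_mul, TPow_mul, H_X_H]
  unfold Ctilde
  rw [Matrix.mul_add, Matrix.add_mul,
    ← Matrix.mul_kronecker_mul, ← Matrix.mul_kronecker_mul,
    ← Matrix.mul_kronecker_mul, ← Matrix.mul_kronecker_mul,
    Matrix.mul_one, hHwHw, hHwXwHw, H_E00_H, H_E11_H,
    Matrix.smul_kronecker, Matrix.smul_kronecker, ← smul_add]
  congr 1
  ext ⟨i, x⟩ ⟨j, y⟩
  simp only [Matrix.kroneckerMap_apply, Matrix.add_apply, Matrix.sub_apply]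
  ring
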